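/- For every real number s > 1 and every integer n ≥ 1, one has Γ(ns+1)·Γ(2s) / Γ((n+2)s) < 1/(n+1)^s. -/

import Mathlib

open Real

open intervalIntegral


lemma real_beta (a b : ℝ) (ha : 0 < a) (hb : 0 < b) :
    Real.Gamma a * Real.Gamma b
      = Real.Gamma (a + b) * ∫ x in (0:ℝ)..1, x ^ (a-1) * (1-x) ^ (b-1) := by
  have h := Complex.Gamma_mul_Gamma_eq_betaIntegral (s := a) (t := b)
    (by simpa using ha) (by simpa using hb)
  have hbeta : Complex.betaIntegral a b
      = ((∫ x in (0:ℝ)..1, x ^ (a-1) * (1-x) ^ (b-1) : ℝ) : ℂ) := by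
    rw [Complex.betaIntegral, ← intervalIntegral.integral_ofReal]
    refine intervalIntegral.integral_congr fun x hx => ?_
    rw [Set.uIcc_of_le (by norm_num : (0:ℝ) ≤ 1)] at hx
    push_cast
    rw [Complex.ofReal_cpow hx.1, Complex.ofReal_cpow (by linarith [hx.2] : (0:ℝ) ≤ 1 - x)]
    push_cast
    ring
  rw [hbeta, ← Complex.ofReal_add, Complex.Gamma_ofReal, Complex.Gamma_ofReal,
    Complex.Gamma_ofReal, ← Complex.ofReal_mul, ← Complex.ofReal_mul] at h
  exact_mod_cast h

lemma amgm (n : ℕ) (hn : 1 ≤ n) (x : ℝ) (hx0 : 0 ≤ x) (hx1 : x ≤ 1) :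
    x ^ n * (1 - x) ^ 2 ≤ 4 * (n:ℝ) ^ n / ((n:ℝ) + 2) ^ (n + 2) := by
  set N : ℝ := (n:ℝ) with hN
  have hN0 : 0 < N := by rw [hN]; exact_mod_cast hn
  have hN2 : 0 < N + 2 := by linarith
  set p₁ : ℝ := (N + 2) * x / N with hp₁
  set p₂ : ℝ := (N + 2) * (1 - x) / 2 with hp₂
  have hp₁0 : 0 ≤ p₁ := by positivity
  have hp₂0 : 0 ≤ p₂ := by
    have : 0 ≤ 1 - x := by linarith
    positivity
  have h := Real.geom_mean_le_arith_mean2_weighted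
    (by positivity : (0:ℝ) ≤ N / (N + 2)) (by positivity : (0:ℝ) ≤ 2 / (N + 2))
    hp₁0 hp₂0 (by field_simp : N / (N + 2) + 2 / (N + 2) = 1)
  have hsum : N / (N + 2) * p₁ + 2 / (N + 2) * p₂ = 1 := by
    field_simp [hp₁, hp₂]; rw [hp₁, hp₂]; field_simp; ring
  rw [hsum] at h
  have e1 : N / (N + 2) * (N + 2) = ((n:ℕ):ℝ) := by rw [← hN]; field_simp
  have e2 : 2 / (N + 2) * (N + 2) = ((2:ℕ):ℝ) := by push_cast; field_simp
  have key : p₁ ^ n * p₂ ^ 2 ≤ 1 := by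
    have h2 := Real.rpow_le_rpow (by positivity) h (le_of_lt hN2)
    rw [Real.one_rpow, Real.mul_rpow (Real.rpow_nonneg hp₁0 _) (Real.rpow_nonneg hp₂0 _),
      ← Real.rpow_mul hp₁0, ← Real.rpow_mul hp₂0, e1, e2,
      Real.rpow_natCast, Real.rpow_natCast] at h2
    exact h2
  have expand : x ^ n * (1 - x) ^ 2
      = (p₁ ^ n * p₂ ^ 2) * (4 * N ^ n / (N + 2) ^ (n + 2)) := by
    rw [hp₁, hp₂, div_pow, div_pow, mul_pow, mul_pow, pow_add]
    field_simp
    ring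
  rw [expand]
  calc (p₁ ^ n * p₂ ^ 2) * (4 * N ^ n / (N + 2) ^ (n + 2))
      ≤ 1 * (4 * N ^ n / (N + 2) ^ (n + 2)) := by
        apply mul_le_mul_of_nonneg_right key; positivity
    _ = 4 * N ^ n / (N + 2) ^ (n + 2) := one_mul _

lemma d_small (n : ℕ) (hn : 1 ≤ n) :
    Real.exp 1 * (4 * (n:ℝ) ^ n * ((n:ℝ) + 1) / ((n:ℝ) + 2) ^ (n + 2)) ≤ 1 := by
  set N : ℝ := (n:ℝ) with hN
  have hN1 : 1 ≤ N := by rw [hN]; exact_mod_cast hn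
  have hN0 : 0 < N := by linarith
  have hbern : 3 * N ^ n ≤ (N + 2) ^ n := by
    have hge : (-2:ℝ) ≤ 2 / N := by
      have h0 : (0:ℝ) ≤ 2 / N := by positivity
      linarith
    have h := one_add_mul_le_pow hge n
    have hnn : (n:ℝ) * (2 / N) = 2 := by rw [← hN]; field_simp
    have h3 : (3:ℝ) ≤ (1 + 2 / N) ^ n := by
      calc (3:ℝ) = 1 + (n:ℝ) * (2 / N) := by rw [hnn]; norm_num
        _ ≤ _ := h
    have heq : (1 + 2 / N) ^ n = (N + 2) ^ n / N ^ n := by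
      rw [← div_pow]; congr 1; field_simp
    rw [heq, le_div_iff₀ (by positivity)] at h3
    linarith
  have h11 : Real.exp 1 * 4 ≤ 11 := by
    nlinarith [Real.exp_one_lt_d9]
  have hNn : (0:ℝ) < N ^ n := by positivity
  have hmain : Real.exp 1 * (4 * N ^ n * (N + 1)) ≤ (N + 2) ^ (n + 2) := by
    have hA : (0:ℝ) ≤ N ^ n * (N + 1) := by positivity
    have step1 : Real.exp 1 * (4 * N ^ n * (N + 1)) ≤ 11 * (N ^ n * (N + 1)) := by
      nlinarith [mul_le_mul_of_nonneg_right h11 hA]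
    have hq : 11 * (N + 1) ≤ 3 * (N + 2) ^ 2 := by nlinarith
    have step2 : 11 * (N ^ n * (N + 1)) ≤ 3 * N ^ n * (N + 2) ^ 2 := by
      nlinarith [mul_le_mul_of_nonneg_left hq hNn.le]
    have step3 : 3 * N ^ n * (N + 2) ^ 2 ≤ (N + 2) ^ (n + 2) := by
      rw [pow_add]
      nlinarith [mul_le_mul_of_nonneg_right hbern (sq_nonneg (N + 2))]
    linarith
  rw [mul_div_assoc', div_le_one (by positivity)]
  exact hmain

lemma scalar (s d : ℝ) (hs : 1 < s) (hd : 0 < d) (hde : Real.exp 1 * d ≤ 1) :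
    s * d ^ (s - 1) < 1 := by
  have hlog : Real.log d ≤ -1 := by
    rw [Real.log_le_iff_le_exp hd, Real.exp_neg, inv_eq_one_div,
      le_div_iff₀ (Real.exp_pos 1)]
    linarith
  have hdp : d ^ (s - 1) = Real.exp ((s - 1) * Real.log d) := by
    rw [Real.rpow_def_of_pos hd]; ring_nf
  have hslt : s < Real.exp (s - 1) := by
    have := Real.add_one_lt_exp (by intro h; apply absurd h; intro h'; linarith : s - 1 ≠ 0)
    linarith
  calc s * d ^ (s - 1) < Real.exp (s - 1) * d ^ (s - 1) := by
        apply mul_lt_mul_of_pos_right hslt (by rw [hdp]; exact Real.exp_pos _)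
    _ = Real.exp ((s - 1) * (1 + Real.log d)) := by
        rw [hdp, ← Real.exp_add]; ring_nf
    _ ≤ Real.exp 0 := by
        apply Real.exp_le_exp.2
        nlinarith
    _ = 1 := Real.exp_zero

/-- Gamma function inequality for analytic monomials:
`Γ(ns+1)Γ(2s)/Γ((n+2)s) < 1/(n+1)^s` for `s > 1` and integers `n ≥ 1`. -/
theorem gamma_monomial_inequality (s : ℝ) (hs : 1 < s) (n : ℕ) (hn : 1 ≤ n) :
    Real.Gamma (n * s + 1) * Real.Gamma (2 * s) / Real.Gamma ((n + 2) * s)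
      < 1 / ((n : ℝ) + 1) ^ s := by
  have hN1 : (1:ℝ) ≤ (n:ℝ) := by exact_mod_cast hn
  have hN0 : (0:ℝ) < (n:ℝ) := by linarith
  have hs0 : (0:ℝ) < s := by linarith
  set N : ℝ := (n:ℝ)
  set c : ℝ := 4 * N ^ n / (N + 2) ^ (n + 2) with hc
  have hcpos : 0 < c := by positivity
  set I : ℝ := ∫ x in (0:ℝ)..1, x ^ (N * s) * (1 - x) ^ (2 * s - 1) with hI
  -- Beta identity
  have hbeta : Real.Gamma (N * s + 1) * Real.Gamma (2 * s)
      = Real.Gamma ((N + 2) * s + 1) * I := by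
    have h := real_beta (N * s + 1) (2 * s) (by nlinarith) (by linarith)
    rw [show N * s + 1 + 2 * s = (N + 2) * s + 1 by ring,
      show N * s + 1 - 1 = N * s by ring] at h
    exact h
  have hGpos : 0 < Real.Gamma ((N + 2) * s) :=
    Real.Gamma_pos_of_pos (by nlinarith)
  have hG1 : Real.Gamma ((N + 2) * s + 1) = (N + 2) * s * Real.Gamma ((N + 2) * s) :=
    Real.Gamma_add_one (by nlinarith)
  -- pointwise bound
  have hpt : ∀ x ∈ Set.Icc (0:ℝ) 1,
      x ^ (N * s) * (1 - x) ^ (2 * s - 1) ≤ c ^ (s - 1) * (x ^ n * (1 - x)) := by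
    rintro x ⟨hx0, hx1⟩
    rcases eq_or_lt_of_le hx0 with h0 | h0
    · rw [← h0]
      rw [Real.zero_rpow (by nlinarith : N * s ≠ 0), zero_mul, zero_pow (by omega : n ≠ 0)]
      simp
    rcases eq_or_lt_of_le hx1 with h1 | h1
    · rw [h1]
      rw [show (1:ℝ) - 1 = 0 by norm_num, Real.zero_rpow (by nlinarith : 2 * s - 1 ≠ 0)]
      simp
    have hy0 : (0:ℝ) < 1 - x := by linarith
    have ex : x ^ (N * s) = (x ^ n : ℝ) ^ (s - 1) * x ^ n := by
      calc x ^ (N * s) = x ^ ((n:ℝ) * (s - 1) + (n:ℝ)) := by congr 1; ring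
        _ = x ^ ((n:ℝ) * (s - 1)) * x ^ ((n:ℝ)) := Real.rpow_add h0 _ _
        _ = (x ^ n : ℝ) ^ (s - 1) * x ^ n := by
            rw [← Real.rpow_natCast x n, ← Real.rpow_mul hx0]
    have ey : (1 - x) ^ (2 * s - 1) = ((1 - x) ^ 2 : ℝ) ^ (s - 1) * (1 - x) := by
      calc (1 - x) ^ (2 * s - 1) = (1 - x) ^ (2 * (s - 1) + 1) := by congr 1; ring
        _ = (1 - x) ^ (2 * (s - 1)) * (1 - x) ^ (1:ℝ) := Real.rpow_add hy0 _ _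
        _ = ((1 - x) ^ 2 : ℝ) ^ (s - 1) * (1 - x) := by
            rw [Real.rpow_one, ← Real.rpow_natCast (1 - x) 2, ← Real.rpow_mul hy0.le]
            norm_num
    rw [ex, ey]
    have hb : (x ^ n * (1 - x) ^ 2 : ℝ) ^ (s - 1) ≤ c ^ (s - 1) :=
      Real.rpow_le_rpow (by positivity) (amgm n hn x hx0 hx1) (by linarith)
    calc (x ^ n : ℝ) ^ (s - 1) * x ^ n * (((1 - x) ^ 2 : ℝ) ^ (s - 1) * (1 - x))
        = (x ^ n * (1 - x) ^ 2 : ℝ) ^ (s - 1) * (x ^ n * (1 - x)) := by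
          rw [Real.mul_rpow (by positivity) (by positivity)]; ring
      _ ≤ c ^ (s - 1) * (x ^ n * (1 - x)) := by
          apply mul_le_mul_of_nonneg_right hb (by positivity)
  -- integrability
  have hfc : Continuous fun x : ℝ => x ^ (N * s) * (1 - x) ^ (2 * s - 1) := by
    apply Continuous.mul
    · exact Real.continuous_rpow_const (by nlinarith)
    · exact (Real.continuous_rpow_const (by nlinarith)).comp (by continuity)
  have hgc : Continuous fun x : ℝ => c ^ (s - 1) * (x ^ n * (1 - x)) := by continuity
  -- value of the comparison integral
  have hJ : (∫ x in (0:ℝ)..1, c ^ (s - 1) * (x ^ n * (1 - x)))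
      = c ^ (s - 1) * (1 / (N + 1) - 1 / (N + 2)) := by
    rw [intervalIntegral.integral_const_mul]
    congr 1
    have : ∀ x : ℝ, x ^ n * (1 - x) = x ^ n - x ^ (n + 1) := fun x => by ring
    simp_rw [this]
    rw [intervalIntegral.integral_sub (intervalIntegral.intervalIntegrable_pow n)
      (intervalIntegral.intervalIntegrable_pow (n + 1)), integral_pow, integral_pow]
    push_cast
    rw [one_pow, one_pow]
    ring
  have hIle : I ≤ c ^ (s - 1) * (1 / (N + 1) - 1 / (N + 2)) := by
    rw [hI, ← hJ]
    exact intervalIntegral.integral_mono_on (by norm_num)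
      (hfc.intervalIntegrable 0 1) (hgc.intervalIntegrable 0 1) hpt
  -- the scalar inequality
  have hd : c * (N + 1) = 4 * N ^ n * (N + 1) / (N + 2) ^ (n + 2) := by
    rw [hc]; ring
  have hsc : s * (c * (N + 1)) ^ (s - 1) < 1 :=
    scalar s _ hs (by positivity) (by rw [hd]; exact d_small n hn)
  have hfin : s * c ^ (s - 1) * (N + 1) ^ (s - 1) < 1 := by
    rwa [Real.mul_rpow hcpos.le (by positivity), ← mul_assoc] at hsc
  have h1s : (N + 1) ^ s = (N + 1) ^ (s - 1) * (N + 1) := by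
    calc (N + 1) ^ s = (N + 1) ^ (s - 1 + 1) := by norm_num
      _ = (N + 1) ^ (s - 1) * (N + 1) ^ (1:ℝ) := Real.rpow_add (by positivity) _ _
      _ = (N + 1) ^ (s - 1) * (N + 1) := by rw [Real.rpow_one]
  -- assembly
  have hLHS : Real.Gamma (N * s + 1) * Real.Gamma (2 * s) / Real.Gamma ((N + 2) * s)
      = (N + 2) * s * I := by
    rw [hbeta, hG1]
    field_simp
  rw [show ((n:ℝ) + 2) * s = (N + 2) * s from rfl, show (n:ℝ) * s + 1 = N * s + 1 from rfl,
    hLHS]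
  have hrpow_pos : (0:ℝ) < (N + 1) ^ s := Real.rpow_pos_of_pos (by positivity) _
  have hcr_pos : (0:ℝ) < c ^ (s - 1) := Real.rpow_pos_of_pos hcpos _
  have hstep : (N + 2) * s * I ≤ s * c ^ (s - 1) / (N + 1) := by
    calc (N + 2) * s * I ≤ (N + 2) * s * (c ^ (s - 1) * (1 / (N + 1) - 1 / (N + 2))) := by
          apply mul_le_mul_of_nonneg_left hIle (by positivity)
      _ = s * c ^ (s - 1) / (N + 1) := by
          rw [show (1:ℝ) / (N + 1) - 1 / (N + 2) = 1 / ((N + 1) * (N + 2)) by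
            field_simp; ring]
          field_simp
  refine lt_of_le_of_lt hstep ?_
  rw [div_lt_div_iff₀ (by positivity) hrpow_pos, h1s, one_mul]
  have := mul_lt_mul_of_pos_right hfin (show (0:ℝ) < N + 1 by positivity)
  nlinarith [this]
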